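/- For each positive integer n, a₁(0,(2n+2)ε,m,ε) = (mε/√(1+m²ε²)) · Pₙ((1−m²ε²)/(1+m²ε²)), where Pₙ is the n-th Legendre polynomial Pₙ(x) = (1/(2ⁿ n!)) dⁿ/dxⁿ (x²−1)ⁿ. -/

import Mathlib

open scoped BigOperators

/-- The final x-coordinate of a checker path from `(0,0)` encoded by its sequence of moves
(`true` = move `(1,1)`, `false` = move `(-1,1)`). -/
def moveEndpoint {n : ℕ} (d : Fin n → Bool) : ℤ :=
  ∑ k, (if d k then (1 : ℤ) else -1)

/-- The number of turns of a checker path encoded by its sequence of moves. -/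
def nturns {n : ℕ} (d : Fin n → Bool) : ℕ :=
  ((List.ofFn d).zip (List.ofFn d).tail).countP fun p => p.1 != p.2

/-- Checker paths from `(0,0)` to `(x,t)` whose first step is to `(1,1)`,
encoded by their sequences of moves. -/
def cpaths (x t : ℤ) : Finset (Fin t.toNat → Bool) :=
  Finset.univ.filter fun d => moveEndpoint d = x ∧ (List.ofFn d).headI = true

/-- Feynman checkers amplitude with mass: `a(x·ε, t·ε, m, ε)` written in lattice
coordinates, i.e. `am m ε x t = (1+m²ε²)^((1-t)/2) * i * ∑ₛ (-i·m·ε)^turns(s)`. -/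
noncomputable def am (m ε : ℝ) (x t : ℤ) : ℂ :=
  (Real.sqrt (1 + m ^ 2 * ε ^ 2) : ℂ) ^ (1 - t) * Complex.I *
    ∑ d ∈ cpaths x t, (-Complex.I * (m * ε)) ^ nturns d

/-- The `n`-th Legendre polynomial `Pₙ(x) = (1/(2ⁿ n!)) dⁿ/dxⁿ (x²−1)ⁿ`. -/
noncomputable def legendre (n : ℕ) : Polynomial ℝ :=
  Polynomial.C (1 / (2 ^ n * n.factorial : ℝ)) *
    (fun p : Polynomial ℝ => Polynomial.derivative p)^[n] ((Polynomial.X ^ 2 - 1) ^ n)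

open Finset Polynomial

/-- recursive turn count on lists -/
def tc : List Bool → ℕ
  | x :: y :: s => (if x == y then 0 else 1) + tc (y :: s)
  | _ => 0

lemma tc_eq (l : List Bool) : (l.zip l.tail).countP (fun p => p.1 != p.2) = tc l := by
  match l with
  | [] => rfl
  | [x] => rfl
  | x :: y :: s =>
    have h := tc_eq (y :: s)
    simp only [List.tail_cons, List.zip_cons_cons, List.countP_cons] at h ⊢
    rw [h]
    cases x <;> cases y <;> simp [tc] <;> omega

lemma nturns_eq {N : ℕ} (d : Fin N → Bool) : nturns d = tc (List.ofFn d) := tc_eq _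

lemma tc_concat2 (l : List Bool) (a c : Bool) :
    tc (l ++ [a, c]) = tc (l ++ [a]) + (if a == c then 0 else 1) := by
  induction l with
  | nil => cases a <;> cases c <;> simp [tc]
  | cons x l' ih =>
    cases l' with
    | nil => cases x <;> cases a <;> cases c <;> simp [tc]
    | cons y l'' =>
      simp only [List.cons_append, tc, List.append_eq] at ih ⊢
      omega

lemma tc_ofFn_snoc {N : ℕ} (e : Fin (N + 1) → Bool) (c : Bool) :
    tc (List.ofFn (Fin.snoc e c : Fin (N + 2) → Bool)) =
      tc (List.ofFn e) + (if e (Fin.last N) == c then 0 else 1) := by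
  rw [List.ofFn_succ' (Fin.snoc e c)]
  have h1 : (fun i : Fin (N+1) => (Fin.snoc e c : Fin (N+2) → Bool) i.castSucc) = e := by
    funext i; simp
  have h2 : (Fin.snoc e c : Fin (N+2) → Bool) (Fin.last (N+1)) = c := by simp
  rw [h1, h2, List.ofFn_succ' e]
  simpa using tc_concat2 (List.ofFn fun i => e (Fin.castSucc i)) (e (Fin.last N)) c

lemma headI_ofFn {N : ℕ} (d : Fin (N + 1) → Bool) : (List.ofFn d).headI = d 0 := by
  rw [List.ofFn_succ]; rfl

def numT {N : ℕ} (d : Fin N → Bool) : ℕ := ∑ k, (if d k then 1 else 0)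

noncomputable def Ssum (z : ℂ) (N p : ℕ) (b : Bool) : ℂ :=
  ∑ d : Fin (N + 1) → Bool,
    if d 0 = true ∧ d (Fin.last N) = b ∧ numT d = p then z ^ tc (List.ofFn d) else 0

lemma numT_pos {N : ℕ} (d : Fin (N + 1) → Bool) (h : d 0 = true) : 0 < numT d := by
  unfold numT
  have : (if d 0 then 1 else 0) ≤ ∑ k, (if d k then 1 else 0) :=
    Finset.single_le_sum (f := fun k => if d k then 1 else 0) (fun _ _ => Nat.zero_le _)
      (Finset.mem_univ 0)
  rw [h] at this; simpa using this

lemma numT_le {N : ℕ} (d : Fin N → Bool) : numT d ≤ N := by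
  unfold numT
  calc ∑ k, (if d k then 1 else 0) ≤ ∑ _k : Fin N, 1 := by
        apply Finset.sum_le_sum; intro i _; split <;> omega
    _ = N := by simp

lemma Ssum_zero (z : ℂ) (N : ℕ) (b : Bool) : Ssum z N 0 b = 0 := by
  apply Finset.sum_eq_zero
  intro d _
  rw [if_neg]
  rintro ⟨h1, -, h3⟩
  have := numT_pos d h1
  omega

lemma Ssum_overflow (z : ℂ) (N p : ℕ) (b : Bool) (hp : N + 1 < p) : Ssum z N p b = 0 := by
  apply Finset.sum_eq_zero
  intro d _
  rw [if_neg]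
  rintro ⟨-, -, h3⟩
  have := numT_le d
  omega

lemma numT_snoc {N : ℕ} (e : Fin (N + 1) → Bool) (c : Bool) :
    numT (Fin.snoc e c : Fin (N + 2) → Bool) = numT e + (if c then 1 else 0) := by
  unfold numT
  rw [Fin.sum_univ_castSucc]
  simp

lemma snoc_zero {N : ℕ} (e : Fin (N + 1) → Bool) (c : Bool) :
    (Fin.snoc e c : Fin (N + 2) → Bool) 0 = e 0 := by
  have : (0 : Fin (N + 2)) = Fin.castSucc 0 := rfl
  rw [this, Fin.snoc_castSucc]

lemma Ssum_expand (z : ℂ) (N p : ℕ) (b : Bool) :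
    Ssum z (N + 1) p b =
      ∑ e : Fin (N + 1) → Bool, ∑ c : Bool,
        (if e 0 = true ∧ c = b ∧ numT e + (if c then 1 else 0) = p
          then z ^ (tc (List.ofFn e) + (if e (Fin.last N) == c then 0 else 1)) else 0) := by
  unfold Ssum
  rw [← (Fin.snocEquiv (fun _ : Fin (N + 2) => Bool)).sum_comp]
  rw [Fintype.sum_prod_type]
  rw [Finset.sum_comm]
  apply Finset.sum_congr rfl
  intro e _
  apply Finset.sum_congr rfl
  intro c _
  have hs : (Fin.snocEquiv (fun _ : Fin (N + 2) => Bool)) (c, e) = Fin.snoc e c := rfl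
  rw [hs, snoc_zero, Fin.snoc_last, numT_snoc, tc_ofFn_snoc]

lemma Ssum_rec_true (z : ℂ) (N p : ℕ) :
    Ssum z (N + 1) (p + 1) true = Ssum z N p true + z * Ssum z N p false := by
  rw [Ssum_expand]
  unfold Ssum
  rw [Finset.mul_sum, ← Finset.sum_add_distrib]
  apply Finset.sum_congr rfl
  intro e _
  rw [Fintype.sum_bool]
  cases he0 : e 0 <;> cases hel : e (Fin.last N) <;>
    by_cases hp : numT e = p <;>
    simp [he0, hel, hp, pow_succ, mul_comm]

lemma Ssum_rec_false (z : ℂ) (N p : ℕ) :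
    Ssum z (N + 1) p false = z * Ssum z N p true + Ssum z N p false := by
  rw [Ssum_expand]
  unfold Ssum
  rw [Finset.mul_sum, ← Finset.sum_add_distrib]
  apply Finset.sum_congr rfl
  intro e _
  rw [Fintype.sum_bool]
  cases he0 : e 0 <;> cases hel : e (Fin.last N) <;>
    by_cases hp : numT e = p <;>
    simp [he0, hel, hp, pow_succ, mul_comm]

lemma Ssum_base_true (z : ℂ) : Ssum z 0 1 true = 1 := by
  unfold Ssum
  rw [← (Equiv.funUnique (Fin 1) Bool).symm.sum_comp]
  rw [Fintype.sum_bool]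
  simp [Equiv.funUnique, numT, tc]

lemma Ssum_base_false (z : ℂ) : Ssum z 0 1 false = 0 := by
  unfold Ssum
  rw [← (Equiv.funUnique (Fin 1) Bool).symm.sum_comp]
  rw [Fintype.sum_bool]
  simp [Equiv.funUnique, numT, tc]

/-- sum over head-true paths with `p+1` trues, `q` falses, ending false -/
noncomputable def fp (z : ℂ) (p q : ℕ) : ℂ :=
  ∑ k ∈ Finset.range q, ((p.choose k * (q - 1).choose k : ℕ) : ℂ) * z ^ (2 * k + 1)

/-- sum over head-true paths with `p+1` trues, `q` falses, ending true -/
noncomputable def gp (z : ℂ) (p q : ℕ) : ℂ :=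
  if q = 0 then 1
  else ∑ i ∈ Finset.range q, ((p.choose (i + 1) * (q - 1).choose i : ℕ) : ℂ) * z ^ (2 * i + 2)

lemma gp_pascal (z : ℂ) (p q : ℕ) : gp z (p + 1) q = gp z p q + z * fp z p q := by
  rcases q with _ | s
  · simp [gp, fp]
  · unfold gp fp
    rw [if_neg (Nat.succ_ne_zero s), if_neg (Nat.succ_ne_zero s), Finset.mul_sum,
      ← Finset.sum_add_distrib]
    simp only [Nat.add_sub_cancel]
    apply Finset.sum_congr rfl
    intro i _
    rw [Nat.choose_succ_succ p i]
    push_cast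
    ring

lemma fp_pascal (z : ℂ) (p q : ℕ) : fp z p (q + 1) = z * gp z p q + fp z p q := by
  rcases q with _ | s
  · simp [fp, gp]
  · unfold gp fp
    rw [if_neg (Nat.succ_ne_zero s), Finset.mul_sum]
    simp only [Nat.add_sub_cancel]
    -- LHS : ∑_{k ∈ range (s+2)} C(p,k) C(s+1,k) z^(2k+1)
    rw [Finset.sum_range_succ' _ (s + 1)]
    -- peel k = 0 : ∑_{k ∈ range (s+1)} C(p,k+1) C(s+1,k+1) z^(2k+3) + z
    rw [Finset.sum_range_succ' (fun k => ((p.choose k * s.choose k : ℕ) : ℂ) * z ^ (2 * k + 1)) s]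
    -- RHS second sum peeled too
    have hext : ∑ i ∈ Finset.range (s + 1),
        z * (((p.choose (i + 1) * s.choose i : ℕ) : ℂ) * z ^ (2 * i + 2))
        = ∑ i ∈ Finset.range (s + 1),
          ((p.choose (i + 1) * s.choose i : ℕ) : ℂ) * z ^ (2 * (i + 1) + 1) := by
      apply Finset.sum_congr rfl; intro i _; ring
    rw [hext]
    have hext2 : ∑ k ∈ Finset.range s,
        ((p.choose (k + 1) * s.choose (k + 1) : ℕ) : ℂ) * z ^ (2 * (k + 1) + 1)
        = ∑ k ∈ Finset.range (s + 1),
          ((p.choose (k + 1) * s.choose (k + 1) : ℕ) : ℂ) * z ^ (2 * (k + 1) + 1) := by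
      rw [Finset.sum_range_succ]
      simp [Nat.choose_succ_self]
    rw [hext2, ← add_assoc, ← Finset.sum_add_distrib]
    congr 1
    · apply Finset.sum_congr rfl
      intro i _
      rw [Nat.choose_succ_succ s i]
      push_cast
      ring
    · simp

lemma Ssum_closed (z : ℂ) : ∀ M p q : ℕ, p + q = M →
    Ssum z (p + q) (p + 1) true = gp z p q ∧ Ssum z (p + q) (p + 1) false = fp z p q := by
  intro M
  induction M with
  | zero =>
    intro p q h
    obtain ⟨rfl, rfl⟩ : p = 0 ∧ q = 0 := by omega
    exact ⟨by simpa [gp] using Ssum_base_true z, by simpa [fp] using Ssum_base_false z⟩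
  | succ M ih =>
    intro p q h
    constructor
    · rw [h, Ssum_rec_true]
      rcases p with _ | r
      · rw [Ssum_zero, Ssum_zero]
        have hq : q = M + 1 := by omega
        subst hq
        simp [gp, Nat.choose_zero_succ]
      · have hr : r + q = M := by omega
        obtain ⟨h1, h2⟩ := ih r q hr
        rw [hr] at h1 h2
        rw [h1, h2, gp_pascal]
    · rw [h, Ssum_rec_false]
      rcases q with _ | s
      · have hp : p = M + 1 := by omega
        rw [Ssum_overflow z M (p + 1) true (by omega), Ssum_overflow z M (p + 1) false (by omega)]
        simp [fp]
      · have hs : p + s = M := by omega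
        obtain ⟨h1, h2⟩ := ih p s hs
        rw [hs] at h1 h2
        rw [h1, h2, fp_pascal]

lemma moveEndpoint_eq_numT {N : ℕ} (d : Fin N → Bool) :
    moveEndpoint d = 2 * (numT d : ℤ) - N := by
  have h1 : ∀ k, (if d k then (1 : ℤ) else -1) = 2 * (if d k then (1 : ℤ) else 0) - 1 := by
    intro k; cases d k <;> simp
  have h2 : ((numT d : ℕ) : ℤ) = ∑ k, (if d k then (1 : ℤ) else 0) := by
    unfold numT; push_cast; rfl
  rw [moveEndpoint, Finset.sum_congr rfl fun k _ => h1 k, Finset.sum_sub_distrib,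
    ← Finset.mul_sum, ← h2]
  simp

lemma cpaths_cast (z : ℂ) (t : ℤ) (N : ℕ) (h : t.toNat = N) :
    ∑ d ∈ cpaths 0 t, z ^ nturns d =
      ∑ d ∈ Finset.univ.filter
        (fun d : Fin N → Bool => moveEndpoint d = 0 ∧ (List.ofFn d).headI = true),
        z ^ nturns d := by
  subst h; rfl

lemma sum_paths (z : ℂ) (n : ℕ) :
    ∑ d ∈ Finset.univ.filter
        (fun d : Fin (2 * n + 1 + 1) → Bool => moveEndpoint d = 0 ∧ (List.ofFn d).headI = true),
        z ^ nturns d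
      = gp z n (n + 1) + fp z n (n + 1) := by
  rw [Finset.sum_filter]
  have step : ∀ d : Fin (2 * n + 1 + 1) → Bool,
      (if moveEndpoint d = 0 ∧ (List.ofFn d).headI = true then z ^ nturns d else 0)
      = (if d 0 = true ∧ d (Fin.last (2 * n + 1)) = true ∧ numT d = n + 1
            then z ^ tc (List.ofFn d) else 0)
        + (if d 0 = true ∧ d (Fin.last (2 * n + 1)) = false ∧ numT d = n + 1
            then z ^ tc (List.ofFn d) else 0) := by
    intro d
    have hme : moveEndpoint d = 0 ↔ numT d = n + 1 := by
      rw [moveEndpoint_eq_numT]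
      constructor <;> intro hh <;> omega
    rw [headI_ofFn, nturns_eq]
    cases hl : d (Fin.last (2 * n + 1)) <;> by_cases h0 : d 0 = true <;>
      by_cases hn : numT d = n + 1 <;> simp [hme, hl, h0, hn]
  rw [Finset.sum_congr rfl fun d _ => step d, Finset.sum_add_distrib]
  have hN : 2 * n + 1 = n + (n + 1) := by ring
  have hc := Ssum_closed z (n + (n + 1)) n (n + 1) rfl
  have e1 : (∑ x : Fin (2*n+1+1) → Bool, if x 0 = true ∧ x (Fin.last (2*n+1)) = true ∧ numT x = n+1 then z ^ tc (List.ofFn x) else 0) = Ssum z (2*n+1) (n+1) true := rfl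
  have e2 : (∑ x : Fin (2*n+1+1) → Bool, if x 0 = true ∧ x (Fin.last (2*n+1)) = false ∧ numT x = n+1 then z ^ tc (List.ofFn x) else 0) = Ssum z (2*n+1) (n+1) false := rfl
  rw [e1, e2, hN, hc.1, hc.2]

lemma legendre_eval (n : ℕ) (x : ℝ) :
    (legendre n).eval x =
      ∑ k ∈ Finset.range (n + 1),
        (n.choose k : ℝ) ^ 2 * ((x - 1) / 2) ^ k * ((x + 1) / 2) ^ (n - k) := by
  have hsplit : ((X : ℝ[X]) ^ 2 - 1) ^ n = (X - C 1) ^ n * (X + C 1) ^ n := by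
    rw [← mul_pow]; congr 1; simp; ring
  unfold legendre
  rw [hsplit, Polynomial.iterate_derivative_mul]
  rw [Polynomial.eval_mul, Polynomial.eval_C, Polynomial.eval_finset_sum, Finset.mul_sum]
  apply Finset.sum_congr rfl
  intro k hk
  have hkn : k ≤ n := Nat.lt_succ_iff.mp (Finset.mem_range.mp hk)
  rw [Polynomial.iterate_derivative_X_sub_pow, Polynomial.iterate_derivative_X_add_pow]
  have hnk : n - (n - k) = k := by omega
  rw [hnk]
  rw [smul_mul_assoc, smul_smul]
  simp only [Polynomial.eval_smul, smul_eq_mul, Polynomial.eval_mul, Polynomial.eval_pow,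
    Polynomial.eval_sub, Polynomial.eval_add, Polynomial.eval_X, Polynomial.eval_C,
    Polynomial.eval_one, nsmul_eq_mul, Polynomial.eval_natCast, Nat.cast_mul]
  -- goal: 1/(2^n n!) * ((C(n,k) * (descF n (n-k) * descF n k)) * ((x-1)^k * (x+1)^(n-k)))
  --     = C(n,k)^2 * ((x-1)/2)^k * ((x+1)/2)^(n-k)
  have hfact : (n.choose k : ℝ) * (n.descFactorial (n - k)) * (n.descFactorial k)
      = (n.choose k : ℝ) ^ 2 * n.factorial := by
    rw [Nat.descFactorial_eq_factorial_mul_choose, Nat.descFactorial_eq_factorial_mul_choose,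
      Nat.choose_symm hkn]
    have hc := Nat.choose_mul_factorial_mul_factorial hkn
    have hcR : (n.choose k : ℝ) * k.factorial * (n - k).factorial = n.factorial := by
      exact_mod_cast congrArg (Nat.cast : ℕ → ℝ) hc
    push_cast
    linear_combination (n.choose k : ℝ) ^ 2 * hcR
  have hfne : (0:ℝ) < n.factorial := by positivity
  rw [show ((2:ℝ))^n = 2^k * 2^(n-k) from by rw [← pow_add]; congr 1; omega]
  field_simp
  rw [div_pow, div_pow]
  field_simp
  push_cast at hfact
  linear_combination ((x-1)^k * (x+1)^(n-k)) * hfact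


/-- `a₁(0,(2n+2)ε,m,ε) = (mε/√(1+m²ε²)) · Pₙ((1−m²ε²)/(1+m²ε²))`. -/
theorem a1_eq_legendre (m ε : ℝ) (hε : 0 < ε) (hm : 0 ≤ m) (n : ℕ) (hn : 0 < n) :
    (am m ε 0 (2 * n + 2)).re =
      m * ε / Real.sqrt (1 + m ^ 2 * ε ^ 2) *
        (legendre n).eval ((1 - m ^ 2 * ε ^ 2) / (1 + m ^ 2 * ε ^ 2)) := by
  have hy0 : (0:ℝ) < 1 + m ^ 2 * ε ^ 2 := by positivity
  set w : ℝ := m * ε with hwdef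
  set z : ℂ := -Complex.I * ((m:ℂ) * (ε:ℂ)) with hzdef
  have hz : z = -Complex.I * (w : ℂ) := by rw [hzdef, hwdef]; push_cast; ring
  have hz2 : z ^ 2 = ((-(w^2) : ℝ) : ℂ) := by
    rw [hz]; push_cast; linear_combination ((w:ℂ)^2) * Complex.I_sq
  set r : ℝ := Real.sqrt (1 + m ^ 2 * ε ^ 2) with hrdef
  have hr0 : 0 < r := Real.sqrt_pos.mpr hy0
  have hr2 : r ^ 2 = 1 + m ^ 2 * ε ^ 2 := Real.sq_sqrt hy0.le
  unfold am
  rw [show (1 - (2 * (n:ℤ) + 2)) = -((2*n+1 : ℕ) : ℤ) by push_cast; ring]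
  rw [zpow_neg, zpow_natCast, ← Complex.ofReal_pow, ← Complex.ofReal_inv]
  rw [cpaths_cast _ _ (2*n+1+1) (by omega), sum_paths]
  -- evaluate the two pieces
  have hgpval : Complex.I * gp z n (n+1)
      = Complex.I * ((∑ i ∈ Finset.range (n+1),
          ((n.choose (i+1) * n.choose i : ℕ) : ℝ) * (-(w^2))^(i+1) : ℝ) : ℂ) := by
    unfold gp
    rw [if_neg (Nat.succ_ne_zero n)]
    simp only [Nat.add_sub_cancel]
    rw [Complex.ofReal_sum]
    congr 1
    apply Finset.sum_congr rfl
    intro i _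
    rw [show 2*i+2 = 2*(i+1) by ring, pow_mul, hz2, ← Complex.ofReal_pow]
    push_cast
    ring
  have hfpval : Complex.I * fp z n (n+1)
      = ((∑ k ∈ Finset.range (n+1),
          ((n.choose k : ℝ) * (n.choose k : ℝ)) * ((-(w^2))^k * w) : ℝ) : ℂ) := by
    unfold fp
    simp only [Nat.add_sub_cancel]
    rw [Finset.mul_sum, Complex.ofReal_sum]
    apply Finset.sum_congr rfl
    intro k _
    rw [pow_succ, pow_mul, hz2, ← Complex.ofReal_pow, hz]
    push_cast
    linear_combination (-((n.choose k : ℂ) * (n.choose k : ℂ) * (-(w:ℂ)^2)^k * (w:ℂ))) * Complex.I_sq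
  rw [mul_assoc, mul_add, hgpval, hfpval]
  rw [show (((r ^ (2*n+1))⁻¹ : ℝ) : ℂ) * (Complex.I * ((∑ i ∈ Finset.range (n+1),
          ((n.choose (i+1) * n.choose i : ℕ) : ℝ) * (-(w^2))^(i+1) : ℝ) : ℂ)
      + ((∑ k ∈ Finset.range (n+1),
          ((n.choose k : ℝ) * (n.choose k : ℝ)) * ((-(w^2))^k * w) : ℝ) : ℂ))
    = ((((r ^ (2*n+1))⁻¹ * ∑ k ∈ Finset.range (n+1),
          ((n.choose k : ℝ) * (n.choose k : ℝ)) * ((-(w^2))^k * w) : ℝ)) : ℂ)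
      + (((r ^ (2*n+1))⁻¹ * ∑ i ∈ Finset.range (n+1),
          ((n.choose (i+1) * n.choose i : ℕ) : ℝ) * (-(w^2))^(i+1) : ℝ)) * Complex.I from by
    push_cast; ring]
  rw [Complex.add_re, Complex.ofReal_re, Complex.mul_I_re, Complex.ofReal_im, neg_zero, add_zero]
  -- now a purely real identity
  rw [legendre_eval]
  rw [Finset.mul_sum, Finset.mul_sum]
  apply Finset.sum_congr rfl
  intro k hk
  have hkn : k ≤ n := Nat.lt_succ_iff.mp (Finset.mem_range.mp hk)
  have hx1 : ((1 - m ^ 2 * ε ^ 2) / (1 + m ^ 2 * ε ^ 2) - 1) / 2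
      = -(m ^ 2 * ε ^ 2) / (1 + m ^ 2 * ε ^ 2) := by
    field_simp
    ring
  have hx2 : ((1 - m ^ 2 * ε ^ 2) / (1 + m ^ 2 * ε ^ 2) + 1) / 2
      = 1 / (1 + m ^ 2 * ε ^ 2) := by
    field_simp
    ring
  rw [hx1, hx2]
  have hrpow : r ^ (2*n+1) = (1 + m ^ 2 * ε ^ 2) ^ n * r := by
    rw [pow_succ, pow_mul, hr2]
  rw [hrpow]
  have hw2 : w ^ 2 = m ^ 2 * ε ^ 2 := by rw [hwdef]; ring
  obtain ⟨j, rfl⟩ := Nat.exists_eq_add_of_le hkn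
  rw [Nat.add_sub_cancel_left, hwdef]
  have h1y : (1 + m ^ 2 * ε ^ 2) ≠ 0 := by positivity
  have hrne : r ≠ 0 := ne_of_gt hr0
  rw [pow_add (1 + m ^ 2 * ε ^ 2) k j]
  field_simp
  rw [← neg_div, div_pow, div_pow, one_pow]
  field_simp
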